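/- For every even integer n with n ≥ 4, the rainbow connection number of the cycle graph C_n on n vertices equals n/2. -/

import Mathlib

open SimpleGraph

/-- An edge coloring of `G` with `k` colors makes `G` rainbow connected if between every pair
of distinct vertices there is a path all of whose edges receive pairwise distinct colors. -/
def IsRainbowConnected {V : Type*} (G : SimpleGraph V) {k : ℕ} (c : Sym2 V → Fin k) : Prop :=
  ∀ u v : V, u ≠ v → ∃ p : G.Walk u v, p.IsPath ∧ (p.edges.map c).Nodup

/-- The rainbow connection number `rc G`: the minimum number of colors `k` for which some
edge coloring with `k` colors makes `G` rainbow connected. -/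
noncomputable def rc {V : Type*} (G : SimpleGraph V) : ℕ :=
  sInf {k | ∃ c : Sym2 V → Fin k, IsRainbowConnected G c}

open scoped Fin.CommRing Fin.NatCast

/-- The walk in the cycle graph going `d` steps "up" from `u`. -/
def walkUp {n : ℕ} : (u : Fin (n+2)) → (d : ℕ) → (cycleGraph (n+2)).Walk u (u + (d : Fin (n+2)))
  | u, 0 => Walk.nil.copy rfl (by simp)
  | u, d+1 =>
    (Walk.cons (by rw [cycleGraph_adj]; right; ring) (walkUp (u+1) d)).copy rfl
      (by push_cast; ring)

lemma walkUp_length {n : ℕ} (u : Fin (n+2)) (d : ℕ) : (walkUp u d).length = d := by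
  induction d generalizing u with
  | zero => simp [walkUp]
  | succ d ih => simp [walkUp, ih]

lemma walkUp_support {n : ℕ} (u : Fin (n+2)) (d : ℕ) :
    (walkUp u d).support = (List.range (d+1)).map (fun i : ℕ => u + (i : Fin (n+2))) := by
  induction d generalizing u with
  | zero => simp [walkUp, List.range_succ]
  | succ d ih =>
    rw [List.range_succ_eq_map]
    simp only [walkUp, Walk.support_copy, Walk.support_cons, ih, List.map_cons, List.map_map]
    congr 1
    · simp
    · apply List.map_congr_left
      intro i _
      simp only [Function.comp_apply, Nat.succ_eq_add_one]
      push_cast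
      ring

lemma walkUp_edges {n : ℕ} (u : Fin (n+2)) (d : ℕ) :
    (walkUp u d).edges =
      (List.range d).map (fun i : ℕ => s(u + (i : Fin (n+2)), u + (i : Fin (n+2)) + 1)) := by
  induction d generalizing u with
  | zero => simp [walkUp, List.range_succ]
  | succ d ih =>
    rw [List.range_succ_eq_map]
    simp only [walkUp, Walk.edges_copy, Walk.edges_cons, ih, List.map_cons, List.map_map]
    congr 1
    · simp
    · apply List.map_congr_left
      intro i _
      simp only [Function.comp_apply, Nat.succ_eq_add_one]
      congr 1 <;> (push_cast; ring)

/-- The coloring of the cycle: edge `{a, a+1}` gets color `a mod m`. -/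
def col (n m : ℕ) [NeZero n] [NeZero m] : Sym2 (Fin n) → Fin m :=
  Sym2.lift ⟨fun u v =>
    if v = u + 1 ∧ ¬ u = v + 1 then ((u.val : ℕ) : Fin m)
    else if u = v + 1 ∧ ¬ v = u + 1 then ((v.val : ℕ) : Fin m) else 0, by
    intro u v
    dsimp only
    split_ifs <;> first | rfl | tauto⟩

lemma col_edge {n m : ℕ} [NeZero n] [NeZero m] (h3 : 3 ≤ n) (a : Fin n) :
    col n m s(a, a + 1) = ((a.val : ℕ) : Fin m) := by
  have h2 : ¬ a = (a + 1) + 1 := by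
    intro h
    have h2' : ((2 : ℕ) : Fin n) = 0 := by
      have h0 : (a + 1 + 1) - a = 0 := sub_eq_zero.mpr h.symm
      calc ((2 : ℕ) : Fin n) = (a + 1 + 1) - a := by push_cast; ring
      _ = 0 := h0
    rw [Fin.natCast_eq_zero] at h2'
    have := Nat.le_of_dvd (by omega) h2'
    omega
  simp [col, Sym2.lift_mk, h2]

lemma walkUp_isPath {n : ℕ} (u : Fin (n+2)) {d : ℕ} (hd : d < n + 2) :
    (walkUp u d).IsPath := by
  rw [Walk.isPath_def, walkUp_support]
  refine List.Nodup.map_on ?_ List.nodup_range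
  intro i hi j hj hij
  rw [List.mem_range] at hi hj
  have : (i : Fin (n+2)) = (j : Fin (n+2)) := add_left_cancel hij
  have := congrArg Fin.val this
  rw [Fin.val_natCast, Fin.val_natCast] at this
  rw [Nat.mod_eq_of_lt (by omega), Nat.mod_eq_of_lt (by omega)] at this
  exact this

lemma walkUp_colors_nodup {n m : ℕ} [NeZero m] (hn : n + 2 = 2 * m) (hm : 2 ≤ m)
    (u : Fin (n+2)) {d : ℕ} (hd : d ≤ m) :
    ((walkUp u d).edges.map (col (n+2) m)).Nodup := by
  rw [walkUp_edges, List.map_map]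
  refine List.Nodup.map_on ?_ List.nodup_range
  intro i hi j hj hij
  rw [List.mem_range] at hi hj
  simp only [Function.comp_apply] at hij
  rw [col_edge (by omega), col_edge (by omega)] at hij
  have hij' := congrArg Fin.val hij
  rw [Fin.val_natCast, Fin.val_natCast] at hij'
  have hmn : m ∣ n + 2 := ⟨2, by omega⟩
  have hval : ∀ k : ℕ, (u + (k : Fin (n+2))).val = (u.val + k) % (n+2) := by
    intro k
    simp [Fin.add_def, Fin.val_natCast, Nat.add_mod_mod]
  rw [hval, hval, Nat.mod_mod_of_dvd _ hmn, Nat.mod_mod_of_dvd _ hmn] at hij'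
  have : i ≡ j [MOD m] := Nat.ModEq.add_left_cancel' u.val hij'
  have hi' : i % m = i := Nat.mod_eq_of_lt (by omega)
  have hj' : j % m = j := Nat.mod_eq_of_lt (by omega)
  rwa [Nat.ModEq, hi', hj'] at this

lemma fin_val_ne_zero {n : ℕ} [NeZero n] {x : Fin n} (h : x ≠ 0) : x.val ≠ 0 := by
  exact fun hx => h (Fin.ext (by simp [hx]))

lemma adj_step {n : ℕ} {u w : Fin (n+2)} (v : Fin (n+2)) (h : (cycleGraph (n+2)).Adj u w) :
    min (v - u).val (u - v).val ≤ min (v - w).val (w - v).val + 1 := by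
  rw [cycleGraph_adj] at h
  rcases h with h | h
  · -- u - w = 1, so u = w + 1
    have hu : u = w + 1 := by rw [← h]; ring
    have hvu : v - u = (v - w) - 1 := by rw [hu]; ring
    have huv : u - v = (w - v) + 1 := by rw [hu]; ring
    have hA : (u - v).val ≤ (w - v).val + 1 := by
      rw [huv, Fin.val_add_one]
      split <;> omega
    by_cases hvw : v = w
    · have : (u - v).val = 1 := by
        rw [huv, hvw, sub_self, zero_add]
        simp
      have hz : (v - w).val = 0 := by rw [hvw, sub_self]; rfl
      omega
    · have hne : v - w ≠ 0 := sub_ne_zero.mpr hvw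
      have hB : (v - u).val = (v - w).val - 1 ∧ 1 ≤ (v - w).val := by
        rw [hvu, Fin.coe_sub_one]
        rw [if_neg hne]
        constructor
        · rfl
        · have := fin_val_ne_zero hne
          omega
      omega
  · -- w - u = 1, so w = u + 1
    have hw : w = u + 1 := by rw [← h]; ring
    have hvu : v - u = (v - w) + 1 := by rw [hw]; ring
    have huv : u - v = (w - v) - 1 := by rw [hw]; ring
    have hA : (v - u).val ≤ (v - w).val + 1 := by
      rw [hvu, Fin.val_add_one]
      split <;> omega
    by_cases hvw : v = w
    · have : (v - u).val = 1 := by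
        rw [hvu, hvw, sub_self, zero_add]
        simp
      have hz : (w - v).val = 0 := by rw [hvw, sub_self]; rfl
      omega
    · have hne : w - v ≠ 0 := sub_ne_zero.mpr (fun hh => hvw hh.symm)
      have hB : (u - v).val = (w - v).val - 1 ∧ 1 ≤ (w - v).val := by
        rw [huv, Fin.coe_sub_one]
        rw [if_neg hne]
        constructor
        · rfl
        · have := fin_val_ne_zero hne
          omega
      omega

lemma walk_length_lb {n : ℕ} {u v : Fin (n+2)} (p : (cycleGraph (n+2)).Walk u v) :
    min (v - u).val (u - v).val ≤ p.length := by
  induction p with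
  | nil => simp
  | @cons a b c hab q ih =>
    calc min (c - a).val (a - c).val ≤ min (c - b).val (b - c).val + 1 := adj_step c hab
    _ ≤ q.length + 1 := by omega
    _ = (Walk.cons hab q).length := (Walk.length_cons _ _).symm

/-- Sum of opposite differences is `n` when vertices are distinct. -/
lemma sub_val_add {n : ℕ} [NeZero n] {u v : Fin n} (h : u ≠ v) :
    (v - u).val + (u - v).val = n := by
  have h1 : (v - u) + (u - v) = 0 := by ring
  have h3 : ((v - u).val + (u - v).val) % n = 0 := by
    rw [← Fin.val_add, h1, Fin.val_zero]
  have h4 : (v - u).val ≠ 0 := fin_val_ne_zero (sub_ne_zero.mpr h.symm)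
  have h5 : (u - v).val ≠ 0 := fin_val_ne_zero (sub_ne_zero.mpr h)
  have h6 : (v - u).val < n := (v - u).isLt
  have h7 : (u - v).val < n := (u - v).isLt
  obtain ⟨c, hc⟩ := Nat.dvd_of_mod_eq_zero h3
  rcases c with _ | _ | c
  · omega
  · omega
  · rw [Nat.mul_succ, Nat.mul_succ] at hc
    omega

/-- For every even integer `n ≥ 4`, the rainbow connection number of the cycle `C n`
equals `n / 2`. -/
theorem rc_cycleGraph_even (n : ℕ) (h4 : 4 ≤ n) (heven : Even n) :
    rc (cycleGraph n) = n / 2 := by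
  obtain ⟨n', rfl⟩ : ∃ n', n = n' + 2 := ⟨n - 2, by omega⟩
  set N := n' + 2 with hN
  obtain ⟨m, hm2⟩ := heven
  have hn2m : N = 2 * m := by omega
  have hm : 2 ≤ m := by omega
  have hNm : N / 2 = m := by omega
  have : NeZero m := ⟨by omega⟩
  rw [hNm]
  -- membership: m colors suffice
  have hmem : m ∈ {k | ∃ c : Sym2 (Fin N) → Fin k, IsRainbowConnected (cycleGraph N) c} := by
    refine ⟨col N m, ?_⟩
    intro u v huv
    have key : ∀ (a b : Fin N), a ≠ b → (b - a).val ≤ m →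
        ∃ p : (cycleGraph N).Walk a (b : Fin N), p.IsPath ∧ (p.edges.map (col N m)).Nodup := by
      intro a b hab hd
      have hend : a + (((b - a).val : ℕ) : Fin N) = b := by
        rw [Fin.cast_val_eq_self]; ring
      refine ⟨(walkUp a (b - a).val).copy rfl hend, ?_, ?_⟩
      · rw [Walk.isPath_copy]
        exact walkUp_isPath a (by omega)
      · rw [Walk.edges_copy]
        exact walkUp_colors_nodup hn2m hm a hd
    by_cases hd : (v - u).val ≤ m
    · exact key u v huv hd
    · have hsum := sub_val_add huv
      obtain ⟨p, hp, hcol⟩ := key v u huv.symm (by omega)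
      refine ⟨p.reverse, hp.reverse, ?_⟩
      rw [Walk.edges_reverse, List.map_reverse, List.nodup_reverse]
      exact hcol
  apply le_antisymm
  · exact Nat.sInf_le hmem
  · refine le_csInf ⟨m, hmem⟩ ?_
    rintro k ⟨c, hc⟩
    have hmN : (m : Fin N) ≠ 0 := by
      intro h
      rw [Fin.natCast_eq_zero] at h
      exact absurd (Nat.le_of_dvd (by omega) h) (by omega)
    obtain ⟨p, hp, hcol⟩ := hc 0 (m : Fin N) (fun h => hmN h.symm)
    have h1 : ((m : Fin N) - 0).val = m := by
      rw [sub_zero, Fin.val_natCast, Nat.mod_eq_of_lt (by omega)]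
    have h2 : ((0 : Fin N) - (m : Fin N)).val = m := by
      have := sub_val_add (show (0 : Fin N) ≠ (m : Fin N) from fun h => hmN h.symm)
      omega
    have hlen := walk_length_lb p
    rw [h1, h2, min_self] at hlen
    have hlek : p.length ≤ k := by
      have := hcol.length_le_card
      rw [List.length_map, Walk.length_edges, Fintype.card_fin] at this
      exact this
    omega
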